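/- arXiv:1910.05142 — 2 statements merged into one kernel-verified Lean document; each statement's English description precedes it below -/
import Mathlib

section
/- The step homogeneous quasi-norm ρ is a homogeneous quasi-norm: ρ(x)>0 for x≠0, ρ(Ax)=bρ(x) for all x, and there exists H∈[1,∞) such that ρ(x+y)≤H[ρ(x)+ρ(y)] for all x,y∈R^n. -/
open MeasureTheory ENNReal Set Filter
open scoped Topology Pointwise NNReal ENNReal

noncomputable section

namespace Aniso

/-- `ℝ^n`, realized as functions `Fin n → ℝ`. -/
abbrev V (n : ℕ) := Fin n → ℝ

/-- Invertible real `n × n` matrices. -/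
abbrev GLn (n : ℕ) := Matrix.GeneralLinearGroup (Fin n) ℝ

variable {n : ℕ}

/-- `b := |det A|`. -/
def absDet (A : GLn n) : ℝ := |Matrix.det (A : Matrix (Fin n) (Fin n) ℝ)|

/-- A matrix is expansive (a dilation) if all of its (complex) eigenvalues have
modulus strictly greater than one. -/
def Expansive (A : GLn n) : Prop :=
  ∀ μ ∈ spectrum ℂ ((A : Matrix (Fin n) (Fin n) ℝ).map (algebraMap ℝ ℂ)),
    1 < ‖μ‖

/-- The Euclidean norm on `Fin n → ℝ`. -/
def euclNorm (x : V n) : ℝ := Real.sqrt (∑ i, x i ^ 2)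

/-- An (open, centered) ellipsoid: the image of the open Euclidean unit ball under an
invertible linear map. -/
def IsEllipsoid (Δ : Set (V n)) : Prop :=
  ∃ T : GLn n,
    Δ = (fun x => Matrix.mulVec (T : Matrix (Fin n) (Fin n) ℝ) x) '' {x | euclNorm x < 1}

/-- The sets `B_k := A^k Δ`. -/
def dball (A : GLn n) (Δ : Set (V n)) (k : ℤ) : Set (V n) :=
  (fun x => Matrix.mulVec ((A ^ k : GLn n) : Matrix (Fin n) (Fin n) ℝ) x) '' Δ

/-- The step homogeneous quasi-norm `ρ(x) := Σ_{k ∈ ℤ} b^k 1_{B_{k+1} \ B_k}(x)`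
(so `ρ(0) = 0`). -/
def rho (A : GLn n) (Δ : Set (V n)) (x : V n) : ℝ :=
  ∑' k : ℤ, (dball A Δ (k + 1) \ dball A Δ k).indicator (fun _ => absDet A ^ k) x

/-- The standing assumptions on a dilation `A` and the associated ellipsoid `Δ`:
`A` is expansive, `Δ` is an open ellipsoid with `|Δ| = 1`, and there is `r ∈ (1, ∞)`
with `Δ ⊆ rΔ ⊆ AΔ`. -/
structure DilationSetup (A : GLn n) (Δ : Set (V n)) (r : ℝ) : Prop where
  expansive : Expansive A
  isOpen : IsOpen Δ
  ellipsoid : IsEllipsoid Δ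
  volume_eq : volume Δ = 1
  one_lt : 1 < r
  subset_smul : Δ ⊆ r • Δ
  smul_subset : r • Δ ⊆ (fun x => Matrix.mulVec (A : Matrix (Fin n) (Fin n) ℝ) x) '' Δ

/-- The family `𝔅` of dilated balls `x + B_k`. -/
def dilatedBalls (A : GLn n) (Δ : Set (V n)) : Set (Set (V n)) :=
  {S | ∃ (x : V n) (k : ℤ), S = (x + ·) '' dball A Δ k}

/-- One step of the iterated mixed-norm: the `L^p` norm in one real variable, with the
usual modification (essential supremum) when `p = ∞`. -/
def lpStep (p : ℝ≥0∞) (g : ℝ → ℝ≥0∞) : ℝ≥0∞ :=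
  if p = ∞ then essSup g volume else (∫⁻ t, g t ^ p.toReal) ^ (1 / p.toReal)

/-- The mixed-norm `‖f‖_{L^{p⃗}(ℝ^n)}`, integrating first in `x₁`, then `x₂`, …,
finally `xₙ`, of an `ℝ≥0∞`-valued function. -/
def mixedNorm : ∀ (n : ℕ), (Fin n → ℝ≥0∞) → ((V n) → ℝ≥0∞) → ℝ≥0∞
  | 0, _, f => f (fun i => i.elim0)
  | (m + 1), p, f =>
      lpStep (p (Fin.last m))
        (fun t => mixedNorm m (fun i => p i.castSucc) (fun y => f (Fin.snoc y t)))

/-- The anisotropic Hardy–Littlewood maximal operator, over dilated balls. -/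
def maximalFn (A : GLn n) (Δ : Set (V n)) (f : V n → ℝ≥0∞) (x : V n) : ℝ≥0∞ :=
  ⨆ (S : Set (V n)) (_ : S ∈ dilatedBalls A Δ) (_ : x ∈ S),
    (volume S)⁻¹ * ∫⁻ z in S, f z

/-- The one-dimensional (uncentered) Hardy–Littlewood maximal operator acting in the
`i`-th coordinate. -/
def coordMax (i : Fin n) (g : V n → ℝ≥0∞) (x : V n) : ℝ≥0∞ :=
  ⨆ (a : ℝ) (b : ℝ) (_ : a ≤ x i) (_ : x i ≤ b) (_ : a < b),
    (ENNReal.ofReal (b - a))⁻¹ * ∫⁻ t in Set.Icc a b, g (Function.update x i t)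

/-- Auxiliary iteration: apply `coordMax` successively in coordinates `0, …, m-1`. -/
def iterMaxAux (g : V n → ℝ≥0∞) : ℕ → (V n → ℝ≥0∞)
  | 0 => g
  | (m + 1) => if h : m < n then coordMax ⟨m, h⟩ (iterMaxAux g m) else iterMaxAux g m

/-- The iterated maximal function `M(f) = Mₙ(⋯(M₁ f)⋯)`. -/
def iterMax (g : V n → ℝ≥0∞) : V n → ℝ≥0∞ := iterMaxAux g n

/-- The `ℓ^u` norm of a sequence in `ℝ≥0∞`, with the usual modification when `u = ∞`. -/
def ellu (u : ℝ≥0∞) (a : ℕ → ℝ≥0∞) : ℝ≥0∞ :=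
  if u = ∞ then ⨆ j, a j else (∑' j, a j ^ u.toReal) ^ (1 / u.toReal)

/-- Tempered distributions on `ℝ^n`. -/
abbrev TDist (n : ℕ) := SchwartzMap (V n) ℂ →L[ℝ] ℂ

/-- `|(f ∗ φ_k)(y)|`, where `φ_k(z) := b^k φ(A^k z)`: the pairing of the tempered
distribution `f` with the Schwartz function `z ↦ b^k φ(A^k(y − z))`. -/
def schwartzConv (A : GLn n) (f : TDist n) (φ : SchwartzMap (V n) ℂ) (k : ℤ)
    (y : V n) : ℝ≥0∞ :=
  ⨆ (ψ : SchwartzMap (V n) ℂ)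
    (_ : ∀ z, ψ z =
      (absDet A ^ k : ℝ) •
        φ (Matrix.mulVec ((A ^ k : GLn n) : Matrix (Fin n) (Fin n) ℝ) (y - z))),
    (‖f ψ‖₊ : ℝ≥0∞)

/-- The truncated non-tangential maximal function `M_φ^{(K,L)}(f)`. -/
def maxNT (A : GLn n) (Δ : Set (V n)) (f : TDist n) (φ : SchwartzMap (V n) ℂ)
    (K : ℤ) (L : ℝ) (x : V n) : ℝ≥0∞ :=
  ⨆ (k : ℤ) (_ : k ≤ K) (y : V n) (_ : y ∈ (x + ·) '' dball A Δ k),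
    schwartzConv A f φ k y *
      ENNReal.ofReal
        ((max 1 (rho A Δ (Matrix.mulVec ((A ^ (-K) : GLn n) : Matrix (Fin n) (Fin n) ℝ) y))) ^ (-L) *
          (1 + absDet A ^ (-k - K)) ^ (-L))

/-- The tangential maximal function `T_φ^{N(K,L)}(f)`. -/
def maxTan (A : GLn n) (Δ : Set (V n)) (f : TDist n) (φ : SchwartzMap (V n) ℂ)
    (N : ℕ) (K : ℤ) (L : ℝ) (x : V n) : ℝ≥0∞ :=
  ⨆ (k : ℤ) (_ : k ≤ K) (y : V n),
    schwartzConv A f φ k y *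
      ENNReal.ofReal
        ((max 1 (rho A Δ (Matrix.mulVec ((A ^ (-k) : GLn n) : Matrix (Fin n) (Fin n) ℝ) (x - y)))) ^ (-(N : ℝ)) *
          ((max 1 (rho A Δ (Matrix.mulVec ((A ^ (-K) : GLn n) : Matrix (Fin n) (Fin n) ℝ) y))) ^ (-L) *
            (1 + absDet A ^ (-k - K)) ^ (-L)))

/-- The partial derivative in the `i`-th coordinate direction. -/
def partialD (i : Fin n) (g : V n → ℂ) : V n → ℂ :=
  fun x => fderiv ℝ g x (Pi.single i 1)

/-- The iterated partial derivative `∂^α`. -/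
def multiD (α : Fin n → ℕ) (g : V n → ℂ) : V n → ℂ :=
  (List.finRange n).foldr (fun i h => (partialD i)^[α i] h) g

/-- Membership in `𝓢_N(ℝ^n)`: all seminorms `‖φ‖_{α,m} = sup_x ρ(x)^m |∂^α φ(x)|`
with `|α| ≤ N`, `m ≤ N` are at most `1`. -/
def InSN (A : GLn n) (Δ : Set (V n)) (N : ℕ) (φ : SchwartzMap (V n) ℂ) : Prop :=
  ∀ (α : Fin n → ℕ) (m : ℕ), (∑ i, α i) ≤ N → m ≤ N →
    ∀ x : V n, rho A Δ x ^ m * ‖multiD α (fun z => φ z) x‖ ≤ 1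

/-- The non-tangential grand maximal function `M_N(f)`. -/
def grandMaximal (A : GLn n) (Δ : Set (V n)) (N : ℕ) (f : TDist n) (x : V n) : ℝ≥0∞ :=
  ⨆ (φ : SchwartzMap (V n) ℂ) (_ : InSN A Δ N φ) (k : ℤ) (y : V n)
    (_ : y ∈ (x + ·) '' dball A Δ k), schwartzConv A f φ k y

/-- The anisotropic Peetre maximal function `(φ*_j f)_t`. -/
def peetre (A : GLn n) (Δ : Set (V n)) (f : TDist n) (φ : SchwartzMap (V n) ℂ)
    (j : ℤ) (t : ℝ) (x : V n) : ℝ≥0∞ :=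
  essSup (fun y => schwartzConv A f φ j (x + y) /
      ENNReal.ofReal ((1 + absDet A ^ j * rho A Δ y) ^ t)) volume

/-- The Fourier transform of a Schwartz function on `ℝ^n`. -/
def ft (φ : SchwartzMap (V n) ℂ) (ξ : V n) : ℂ :=
  ∫ x : V n, Complex.exp (-(2 * Real.pi * Complex.I) * (∑ i, (x i : ℂ) * (ξ i : ℂ))) * φ x

/-- The Hilbert–Schmidt norm `‖A‖` of a matrix. -/
def matNorm (A : GLn n) : ℝ := Real.sqrt (∑ i, ∑ j, ((A : Matrix (Fin n) (Fin n) ℝ) i j) ^ 2)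

/-- Polynomial functions on `ℝ^n` of (total) degree at most `s`. -/
def polyOfDeg (n s : ℕ) : Set (V n → ℂ) :=
  {P | ∃ Q : MvPolynomial (Fin n) ℂ, Q.totalDegree ≤ s ∧
    ∀ x, P x = MvPolynomial.eval (fun i => (x i : ℂ)) Q}

/-- The anisotropic mixed-norm Campanato seminorm `‖f‖_{𝓛^A_{p⃗,q,s}}`. -/
def campanato (A : GLn n) (Δ : Set (V n)) (p : Fin n → ℝ≥0∞) (q : ℝ) (s : ℕ)
    (f : V n → ℂ) : ℝ≥0∞ :=
  ⨆ (B : Set (V n)) (_ : B ∈ dilatedBalls A Δ), ⨅ (P : V n → ℂ) (_ : P ∈ polyOfDeg n s),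
    (volume B / mixedNorm n p (B.indicator fun _ => 1)) *
      ((volume B)⁻¹ * ∫⁻ x in B, (‖f x - P x‖₊ : ℝ≥0∞) ^ q) ^ (1 / q)

/-- An anisotropic mixed-norm `(p⃗, r, s)`-atom supported in the dilated ball `B`. -/
def IsMixedAtom (A : GLn n) (Δ : Set (V n)) (p : Fin n → ℝ≥0∞) (r : ℝ≥0∞) (s : ℕ)
    (a : V n → ℂ) (B : Set (V n)) : Prop :=
  B ∈ dilatedBalls A Δ ∧
  Function.support a ⊆ B ∧
  eLpNorm a r volume ≤ volume B ^ (1 / r).toReal / mixedNorm n p (B.indicator fun _ => 1) ∧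
  ∀ γ : Fin n → ℕ, (∑ i, γ i) ≤ s → (∫ x : V n, a x * ∏ i, (x i : ℂ) ^ γ i) = 0

/-- The quantity `‖{Σ_i [|λ_i| 1_{B_i} / ‖1_{B_i}‖_{p⃗}]^{p̲}}^{1/p̲}‖_{L^{p⃗}}`. -/
def atomSum (p : Fin n → ℝ≥0∞) (pu : ℝ) (lam : ℕ → ℂ) (Bs : ℕ → Set (V n)) : ℝ≥0∞ :=
  mixedNorm n p (fun x =>
    (∑' i, (((‖lam i‖₊ : ℝ≥0∞) * (Bs i).indicator (fun _ => (1 : ℝ≥0∞)) x) /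
        mixedNorm n p ((Bs i).indicator fun _ => 1)) ^ pu) ^ (1 / pu))

/-- The atomic quasi-norm of a function `g`: the infimum of `atomSum` over all atomic
decompositions `g = Σ λ_i a_i` converging in `𝓢'(ℝ^n)`. -/
def atomicNorm (A : GLn n) (Δ : Set (V n)) (p : Fin n → ℝ≥0∞) (pu : ℝ) (r : ℝ≥0∞)
    (s : ℕ) (g : V n → ℂ) : ℝ≥0∞ :=
  ⨅ (lam : ℕ → ℂ) (a : ℕ → V n → ℂ) (Bs : ℕ → Set (V n))
    (_ : ∀ i, IsMixedAtom A Δ p r s (a i) (Bs i))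
    (_ : ∀ ψ : SchwartzMap (V n) ℂ,
      Tendsto (fun m => ∑ i ∈ Finset.range m, lam i * ∫ x, a i x * ψ x) atTop
        (𝓝 (∫ x, g x * ψ x))),
    atomSum p pu lam Bs


section QN

/-- `A^k` acting on vectors. -/
def mvQN (A : GLn n) (k : ℤ) (x : V n) : V n :=
  Matrix.mulVec ((A ^ k : GLn n) : Matrix (Fin n) (Fin n) ℝ) x

local notation "mv" => mvQN

variable (A : GLn n) (Δ : Set (V n)) (r : ℝ)

lemma mv_mvQN (j k : ℤ) (x : V n) : mv A j (mv A k x) = mv A (j + k) x := by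
  simp only [mvQN, Matrix.mulVec_mulVec, ← Matrix.GeneralLinearGroup.coe_mul, ← zpow_add]

lemma mv_idQN (x : V n) : mv A 0 x = x := by simp [mvQN]

lemma mv_injQN (k : ℤ) : Function.Injective (mv A k) := by
  intro a b hab
  have := congrArg (mv A (-k)) hab
  rwa [mv_mvQN, mv_mvQN, neg_add_cancel, mv_idQN, mv_idQN] at this

lemma dball_defQN (k : ℤ) : dball A Δ k = mv A k '' Δ := rfl

lemma dball_shiftQN (j k : ℤ) : dball A Δ (j + k) = mv A j '' dball A Δ k := by
  rw [dball_defQN, dball_defQN, Set.image_image]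
  simp only [mv_mvQN]

lemma mem_dball_shiftQN (j k : ℤ) (x : V n) :
    mv A j x ∈ dball A Δ (j + k) ↔ x ∈ dball A Δ k := by
  rw [dball_shiftQN]
  exact (mv_injQN A j).mem_set_image

variable {A Δ r} (h : DilationSetup A Δ r)
include h

lemma subset_dball_oneQN : Δ ⊆ dball A Δ 1 := by
  intro x hx
  obtain ⟨u, hu, he⟩ := h.smul_subset (h.subset_smul hx)
  exact ⟨u, hu, by simpa [mvQN, zpow_one] using he⟩

lemma dball_subset_succQN (k : ℤ) : dball A Δ k ⊆ dball A Δ (k + 1) := by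
  rw [show k + 1 = k + 1 from rfl, dball_shiftQN A Δ k 1, dball_defQN A Δ k]
  exact Set.image_mono (subset_dball_oneQN h)

lemma dball_monoQN {j k : ℤ} (hjk : j ≤ k) : dball A Δ j ⊆ dball A Δ k := by
  have key : ∀ d : ℕ, dball A Δ j ⊆ dball A Δ (j + d) := by
    intro d
    induction d with
    | zero => simpa using subset_rfl
    | succ d ih =>
      have h2 := ih.trans (dball_subset_succQN h (j + d))
      rwa [show (j + (d:ℤ)) + 1 = j + ((d+1 : ℕ) : ℤ) by push_cast; ring] at h2
  have hk : k = j + ((k - j).toNat : ℤ) := by omega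
  rw [hk]
  exact key _

omit h
lemma zero_mem_DeltaQN (hell : IsEllipsoid Δ) : (0 : V n) ∈ Δ := by
  obtain ⟨T, rfl⟩ := hell
  exact ⟨0, by simp [euclNorm], Matrix.mulVec_zero _⟩
include h

lemma zero_mem_dballQN (k : ℤ) : (0 : V n) ∈ dball A Δ k :=
  ⟨0, zero_mem_DeltaQN h.ellipsoid, Matrix.mulVec_zero _⟩

lemma exists_boundQN : ∃ C : ℝ, 0 ≤ C ∧ ∀ x ∈ Δ, ‖x‖ ≤ C := by
  obtain ⟨T, hT⟩ := h.ellipsoid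
  refine ⟨∑ i, ∑ j, |(T : Matrix (Fin n) (Fin n) ℝ) i j|, by positivity, ?_⟩
  rw [hT]
  rintro x ⟨u, hu, rfl⟩
  have hui : ∀ i, |u i| ≤ 1 := by
    intro i
    have h1 : u i ^ 2 ≤ ∑ j, u j ^ 2 :=
      Finset.single_le_sum (f := fun j => u j ^ 2) (fun j _ => sq_nonneg _) (Finset.mem_univ i)
    have h2 := (Real.sqrt_le_sqrt h1).trans (le_of_lt hu)
    rwa [Real.sqrt_sq_eq_abs] at h2
  rw [pi_norm_le_iff_of_nonneg (by positivity)]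
  intro i
  calc ‖Matrix.mulVec (T : Matrix (Fin n) (Fin n) ℝ) u i‖
      = |∑ j, (T : Matrix (Fin n) (Fin n) ℝ) i j * u j| := by
        simp [Matrix.mulVec, dotProduct, Real.norm_eq_abs]
    _ ≤ ∑ j, |(T : Matrix (Fin n) (Fin n) ℝ) i j * u j| := Finset.abs_sum_le_sum_abs _ _
    _ ≤ ∑ j, |(T : Matrix (Fin n) (Fin n) ℝ) i j| := by
        refine Finset.sum_le_sum fun j _ => ?_
        rw [abs_mul]
        exact mul_le_of_le_one_right (abs_nonneg _) (hui j)
    _ ≤ ∑ i, ∑ j, |(T : Matrix (Fin n) (Fin n) ℝ) i j| :=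
        Finset.single_le_sum (f := fun i => ∑ j, |(T : Matrix (Fin n) (Fin n) ℝ) i j|)
          (fun i _ => Finset.sum_nonneg fun j _ => abs_nonneg _) (Finset.mem_univ i)

lemma rpow_smul_subsetQN (m : ℕ) : r ^ m • Δ ⊆ dball A Δ (m : ℤ) := by
  induction m with
  | zero =>
    rintro x ⟨u, hu, rfl⟩
    exact ⟨u, hu, by simpa [mvQN] using (by simp : (1:ℝ) • u = u)⟩
  | succ m ih =>
    rintro x ⟨u, hu, rfl⟩
    obtain ⟨v, hv, hve⟩ := h.smul_subset (Set.smul_mem_smul_set (a := r) hu)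
    have h3 : r ^ m • v ∈ dball A Δ (m : ℤ) := ih (Set.smul_mem_smul_set hv)
    have h4 : mv A 1 (r ^ m • v) ∈ mv A 1 '' dball A Δ (m : ℤ) := Set.mem_image_of_mem _ h3
    rw [← dball_shiftQN] at h4
    have hx' : mv A 1 (r ^ m • v) = r ^ (m + 1) • u := by
      simp only [mvQN, zpow_one, Matrix.mulVec_smul]
      have hve' : Matrix.mulVec (A : Matrix (Fin n) (Fin n) ℝ) v = r • u := hve
      rw [hve', smul_smul, ← pow_succ]
    rw [hx'] at h4
    have : ((m : ℤ) + 1) = ((m + 1 : ℕ) : ℤ) := by push_cast; ring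
    rwa [add_comm, this] at h4

lemma mem_dball_of_norm_ltQN {ε : ℝ} (hε : 0 < ε) (hball : Metric.ball (0 : V n) ε ⊆ Δ)
    (m : ℕ) (w : V n) (hw : ‖w‖ < ε * r ^ m) : w ∈ dball A Δ (m : ℤ) := by
  have hr0 : (0:ℝ) < r := lt_trans one_pos h.one_lt
  have hrm : (0:ℝ) < r ^ m := pow_pos hr0 m
  apply rpow_smul_subsetQN h
  refine ⟨(r ^ m)⁻¹ • w, hball ?_, smul_inv_smul₀ hrm.ne' w⟩
  rw [Metric.mem_ball, dist_zero_right, norm_smul, Real.norm_eq_abs,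
    abs_of_pos (inv_pos.mpr hrm)]
  have := mul_lt_mul_of_pos_left hw (inv_pos.mpr hrm)
  calc (r ^ m)⁻¹ * ‖w‖ < (r ^ m)⁻¹ * (ε * r ^ m) := this
    _ = ε := by field_simp

lemma exists_not_memQN (x : V n) (hx : x ≠ 0) : ∃ k : ℤ, x ∉ dball A Δ k := by
  obtain ⟨C, hC0, hC⟩ := exists_boundQN h
  have hxn : (0:ℝ) < ‖x‖ := norm_pos_iff.mpr hx
  obtain ⟨m, hm⟩ := pow_unbounded_of_one_lt (C / ‖x‖) h.one_lt
  refine ⟨-(m : ℤ), fun hmem => ?_⟩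
  obtain ⟨u, hu, hue⟩ := hmem
  have hue' : mv A (-(m:ℤ)) u = x := hue
  have h1 : r ^ m • u ∈ dball A Δ (m : ℤ) := rpow_smul_subsetQN h m (Set.smul_mem_smul_set hu)
  obtain ⟨w, hw, hwe⟩ := h1
  have hwe' : mv A (m:ℤ) w = r ^ m • u := hwe
  have h2 : r ^ m • x ∈ Δ := by
    have : mv A (-(m:ℤ)) (mv A (m:ℤ) w) = w := by
      rw [mv_mvQN, neg_add_cancel, mv_idQN]
    rw [hwe'] at this
    have hsm : mv A (-(m:ℤ)) (r ^ m • u) = r ^ m • mv A (-(m:ℤ)) u := Matrix.mulVec_smul _ _ _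
    rw [hsm, hue'] at this
    rw [this]
    exact hw
  have h3 : ‖r ^ m • x‖ ≤ C := hC _ h2
  have hr0 : (0:ℝ) < r := lt_trans one_pos h.one_lt
  have hrm : (0:ℝ) < r ^ m := pow_pos hr0 m
  rw [norm_smul, Real.norm_eq_abs, abs_of_pos hrm] at h3
  have := (div_lt_iff₀ hxn).mp hm
  nlinarith

lemma exists_leastQN (x : V n) (hx : x ≠ 0) {ε : ℝ} (hε : 0 < ε)
    (hball : Metric.ball (0 : V n) ε ⊆ Δ) :
    ∃ ℓ : ℤ, x ∈ dball A Δ ℓ ∧ x ∉ dball A Δ (ℓ - 1) ∧ ∀ k, x ∈ dball A Δ k → ℓ ≤ k := by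
  obtain ⟨k₀, hk₀⟩ := exists_not_memQN h x hx
  have hmem : ∃ k : ℤ, x ∈ dball A Δ k := by
    obtain ⟨m, hm⟩ := pow_unbounded_of_one_lt (‖x‖ / ε) h.one_lt
    have : ‖x‖ < ε * r ^ m := by
      have := (div_lt_iff₀ hε).mp hm
      nlinarith [pow_pos (lt_trans one_pos h.one_lt) m]
    exact ⟨m, mem_dball_of_norm_ltQN h hε hball m x this⟩
  have hbdd : ∃ b : ℤ, ∀ z : ℤ, x ∈ dball A Δ z → b ≤ z := by
    refine ⟨k₀ + 1, fun z hz => ?_⟩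
    by_contra hc
    exact hk₀ (dball_monoQN h (by omega : z ≤ k₀) hz)
  obtain ⟨ℓ, hℓ1, hℓ2⟩ := Int.exists_least_of_bdd hbdd hmem
  refine ⟨ℓ, hℓ1, fun hc => ?_, hℓ2⟩
  have := hℓ2 _ hc
  omega

omit h
lemma absDet_posQN : 0 < absDet A := by
  have hu : IsUnit (A : Matrix (Fin n) (Fin n) ℝ) := ⟨A, rfl⟩
  exact abs_pos.mpr ((Matrix.isUnit_iff_isUnit_det _).mp hu).ne_zero
include h

lemma one_le_absDetQN : 1 ≤ absDet A := by
  have himg : volume ((fun x => Matrix.mulVec (A : Matrix (Fin n) (Fin n) ℝ) x) '' Δ)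
      = ENNReal.ofReal (absDet A) * volume Δ := by
    have he : (fun x => Matrix.mulVec (A : Matrix (Fin n) (Fin n) ℝ) x)
        = ⇑(Matrix.mulVecLin (A : Matrix (Fin n) (Fin n) ℝ)) := rfl
    rw [he, Measure.addHaar_image_linearMap]
    congr 2
    exact congrArg _ (LinearMap.det_toLin' _)
  have hsub : Δ ⊆ (fun x => Matrix.mulVec (A : Matrix (Fin n) (Fin n) ℝ) x) '' Δ :=
    fun x hx => h.smul_subset (h.subset_smul hx)
  have hle : volume Δ ≤ ENNReal.ofReal (absDet A) * volume Δ := by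
    rw [← himg]
    exact measure_mono hsub
  rw [h.volume_eq, mul_one] at hle
  have := ENNReal.one_le_ofReal.mp hle
  exact this

lemma rho_applyQN {x : V n} {ℓ : ℤ} (h1 : x ∈ dball A Δ ℓ) (h2 : x ∉ dball A Δ (ℓ - 1)) :
    rho A Δ x = absDet A ^ (ℓ - 1) := by
  rw [rho]
  rw [tsum_eq_single (ℓ - 1) ?_]
  · rw [Set.indicator_of_mem]
    exact ⟨by rwa [sub_add_cancel], h2⟩
  · intro k hk
    rcases lt_or_gt_of_ne hk with hlt | hgt
    · refine Set.indicator_of_notMem (fun hc => ?_) _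
      exact h2 (dball_monoQN h (by omega : k + 1 ≤ ℓ - 1) hc.1)
    · refine Set.indicator_of_notMem (fun hc => ?_) _
      exact hc.2 (dball_monoQN h (by omega : ℓ ≤ k) h1)

lemma rho_zeroQN : rho A Δ 0 = 0 := by
  rw [rho]
  have : ∀ k : ℤ, (dball A Δ (k + 1) \ dball A Δ k).indicator
      (fun _ => absDet A ^ k) (0 : V n) = 0 := fun k =>
    Set.indicator_of_notMem (fun hc => hc.2 (zero_mem_dballQN h k)) _
  rw [tsum_congr this, tsum_zero]

omit h
lemma rho_nonnegQN (x : V n) : 0 ≤ rho A Δ x :=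
  tsum_nonneg fun k => Set.indicator_nonneg
    (fun _ _ => zpow_nonneg (le_of_lt (absDet_posQN (A := A))) _) _

lemma memA_iffQN (x : V n) (k : ℤ) :
    Matrix.mulVec (A : Matrix (Fin n) (Fin n) ℝ) x ∈ dball A Δ k ↔ x ∈ dball A Δ (k - 1) := by
  have he : Matrix.mulVec (A : Matrix (Fin n) (Fin n) ℝ) x = mv A 1 x := by
    simp [mvQN, zpow_one]
  rw [he]
  conv_lhs => rw [show k = 1 + (k - 1) by ring]
  exact mem_dball_shiftQN A Δ 1 (k - 1) x
include h

lemma rho_smulAQN (x : V n) :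
    rho A Δ (Matrix.mulVec (A : Matrix (Fin n) (Fin n) ℝ) x) = absDet A * rho A Δ x := by
  have hb0 : (0:ℝ) < absDet A := absDet_posQN (A := A)
  have hterm : ∀ k : ℤ,
      (dball A Δ (k + 1) \ dball A Δ k).indicator (fun _ => absDet A ^ k)
        (Matrix.mulVec (A : Matrix (Fin n) (Fin n) ℝ) x)
      = absDet A * ((dball A Δ ((k - 1) + 1) \ dball A Δ (k - 1)).indicator
          (fun _ => absDet A ^ (k - 1)) x) := by
    intro k
    by_cases hc : x ∈ dball A Δ ((k - 1) + 1) \ dball A Δ (k - 1)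
    · rw [Set.indicator_of_mem _ , Set.indicator_of_mem hc]
      · calc absDet A ^ k = absDet A ^ (1 + (k - 1)) := by
              exact congrArg (fun t => absDet A ^ t) (by ring)
          _ = absDet A ^ (1:ℤ) * absDet A ^ (k - 1) := zpow_add₀ hb0.ne' 1 (k - 1)
          _ = absDet A * absDet A ^ (k - 1) := by rw [zpow_one]
      · constructor
        · rw [memA_iffQN, show k + 1 - 1 = (k-1) + 1 by ring]
          exact hc.1
        · rw [memA_iffQN]
          exact hc.2
    · rw [Set.indicator_of_notMem _ _, Set.indicator_of_notMem hc, mul_zero]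
      intro hmem
      refine hc ⟨?_, ?_⟩
      · have := hmem.1
        rw [memA_iffQN, show k + 1 - 1 = (k-1) + 1 by ring] at this
        exact this
      · intro hcc
        exact hmem.2 ((memA_iffQN x k).mpr hcc)
  rw [rho, rho, tsum_congr hterm, tsum_mul_left]
  congr 1
  have := (Equiv.subRight (1:ℤ)).tsum_eq (f := fun j : ℤ =>
    (dball A Δ (j + 1) \ dball A Δ j).indicator (fun _ => absDet A ^ j) x)
  simpa using this

lemma add_mem_dballQN {m : ℕ} (hm : ∀ u ∈ Δ, ∀ v ∈ Δ, u + v ∈ dball A Δ (m : ℤ))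
    {k : ℤ} {x y : V n} (hx : x ∈ dball A Δ k) (hy : y ∈ dball A Δ k) :
    x + y ∈ dball A Δ (k + m) := by
  obtain ⟨u, hu, hue⟩ := hx
  obtain ⟨v, hv, hve⟩ := hy
  have h4 : mv A k (u + v) ∈ mv A k '' dball A Δ (m:ℤ) := Set.mem_image_of_mem _ (hm u hu v hv)
  rw [← dball_shiftQN] at h4
  have he : mv A k (u + v) = x + y := by
    rw [show mv A k (u+v) = mv A k u + mv A k v from Matrix.mulVec_add _ _ _]
    have hue' : mv A k u = x := hue
    have hve' : mv A k v = y := hve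
    rw [hue', hve']
  rwa [he] at h4
end QN

/-- The step homogeneous quasi-norm is a homogeneous quasi-norm:
it is positive away from the origin, satisfies `ρ(Ax) = bρ(x)`, and satisfies the
quasi-triangle inequality for some `H ∈ [1, ∞)`. -/
theorem rho_is_quasinorm (n : ℕ) (A : GLn n) (Δ : Set (V n)) (r : ℝ)
    (h : DilationSetup A Δ r) :
    (∀ x : V n, x ≠ 0 → 0 < rho A Δ x) ∧
    (∀ x : V n, rho A Δ (Matrix.mulVec (A : Matrix (Fin n) (Fin n) ℝ) x)
        = absDet A * rho A Δ x) ∧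
    (∃ H : ℝ, 1 ≤ H ∧ ∀ x y : V n, rho A Δ (x + y) ≤ H * (rho A Δ x + rho A Δ y)) := by
  have hb0 : (0:ℝ) < absDet A := absDet_posQN (A := A)
  have hb1 : 1 ≤ absDet A := one_le_absDetQN h
  obtain ⟨ε, hε, hball⟩ := Metric.isOpen_iff.mp h.isOpen 0 (zero_mem_DeltaQN h.ellipsoid)
  obtain ⟨C, hC0, hC⟩ := exists_boundQN h
  obtain ⟨m, hm⟩ := pow_unbounded_of_one_lt ((C + C) / ε) h.one_lt
  have hr0 : (0:ℝ) < r := lt_trans one_pos h.one_lt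
  have hH1 : (1:ℝ) ≤ absDet A ^ (m : ℤ) := one_le_zpow₀ hb1 (Int.natCast_nonneg m)
  have hmsum : ∀ u ∈ Δ, ∀ v ∈ Δ, u + v ∈ dball A Δ (m : ℤ) := by
    intro u hu v hv
    apply mem_dball_of_norm_ltQN h hε hball m
    have h9 := (div_lt_iff₀ hε).mp hm
    calc ‖u + v‖ ≤ ‖u‖ + ‖v‖ := norm_add_le u v
      _ ≤ C + C := add_le_add (hC u hu) (hC v hv)
      _ < ε * r ^ m := by nlinarith
  refine ⟨?_, fun x => rho_smulAQN h x, ?_⟩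
  · intro x hx
    obtain ⟨ℓ, h1, h2, -⟩ := exists_leastQN h x hx hε hball
    rw [rho_applyQN h h1 h2]
    exact zpow_pos hb0 _
  · refine ⟨absDet A ^ (m : ℤ), hH1, ?_⟩
    intro x y
    have hρx := rho_nonnegQN (A := A) (Δ := Δ) x
    have hρy := rho_nonnegQN (A := A) (Δ := Δ) y
    by_cases hx : x = 0
    · subst hx
      rw [zero_add, rho_zeroQN h, zero_add]
      nlinarith
    by_cases hy : y = 0
    · subst hy
      rw [add_zero, rho_zeroQN h, add_zero]
      nlinarith
    by_cases hxy : x + y = 0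
    · rw [hxy, rho_zeroQN h]
      exact mul_nonneg (by linarith) (by linarith)
    obtain ⟨ℓx, hx1, hx2, -⟩ := exists_leastQN h x hx hε hball
    obtain ⟨ℓy, hy1, hy2, -⟩ := exists_leastQN h y hy hε hball
    obtain ⟨ℓ, hz1, hz2, hzmin⟩ := exists_leastQN h (x + y) hxy hε hball
    set L := max ℓx ℓy with hL
    have hxL : x ∈ dball A Δ L := dball_monoQN h (le_max_left _ _) hx1
    have hyL : y ∈ dball A Δ L := dball_monoQN h (le_max_right _ _) hy1
    have hadd : x + y ∈ dball A Δ (L + m) := add_mem_dballQN h hmsum hxL hyL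
    have hlm : ℓ ≤ L + m := hzmin _ hadd
    rw [rho_applyQN h hz1 hz2, rho_applyQN h hx1 hx2, rho_applyQN h hy1 hy2]
    have h5 : absDet A ^ (ℓ - 1) ≤ absDet A ^ (L + m - 1) :=
      zpow_le_zpow_right₀ hb1 (by omega)
    have h6 : absDet A ^ (L + m - 1) = absDet A ^ (m : ℤ) * absDet A ^ (L - 1) := by
      rw [← zpow_add₀ hb0.ne']
      exact congrArg (fun t => absDet A ^ t) (by ring)
    have h7 : absDet A ^ (L - 1) ≤ absDet A ^ (ℓx - 1) + absDet A ^ (ℓy - 1) := by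
      rcases max_cases ℓx ℓy with ⟨he, -⟩ | ⟨he, -⟩
      · rw [hL, he]
        nlinarith [zpow_pos hb0 (ℓy - 1)]
      · rw [hL, he]
        nlinarith [zpow_pos hb0 (ℓx - 1)]
    calc absDet A ^ (ℓ - 1) ≤ absDet A ^ (L + m - 1) := h5
      _ = absDet A ^ (m : ℤ) * absDet A ^ (L - 1) := h6
      _ ≤ absDet A ^ (m : ℤ) * (absDet A ^ (ℓx - 1) + absDet A ^ (ℓy - 1)) :=
          mul_le_mul_of_nonneg_left h7 (le_of_lt (zpow_pos hb0 _))



end Aniso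
end
end

section
/- Let p⃗∈(0,1]^n and let p̲∈(0,min{p₋,1}) where p₋:=min{p₁,…,pₙ}. Then for any {λ_i}_{i∈N}⊂C and dilated balls {B^{(i)}}_{i∈N}⊂𝔅, one has Σ_{i∈N}|λ_i| ≤ ‖ { Σ_{i∈N} [ |λ_i| 1_{B^{(i)}} / ‖1_{B^{(i)}}‖_{L^{p⃗}(R^n)} ]^{p̲} }^{1/p̲} ‖_{L^{p⃗}(R^n)}. -/
open MeasureTheory ENNReal Set Filter
open scoped Topology Pointwise NNReal ENNReal

noncomputable section

namespace Aniso

variable {n : ℕ}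

/-! ### Auxiliary lemmas -/

section AuxLemmas

/-- `ℓ¹ ≤ ℓ^{pu}` for `pu ≤ 1`. -/
lemma tsum_le_rpow_tsum_rpow (a : ℕ → ℝ≥0∞) {pu : ℝ} (h0 : 0 < pu) (h1 : pu ≤ 1) :
    ∑' i, a i ≤ (∑' i, a i ^ pu) ^ (1 / pu) := by
  have hq : (1 : ℝ) ≤ 1 / pu := by
    rw [le_div_iff₀ h0]; simpa using h1
  have two_add : ∀ X Y : ℝ≥0∞, X + Y ≤ (X ^ pu + Y ^ pu) ^ (1 / pu) := by
    intro X Y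
    have h := ENNReal.add_rpow_le_rpow_add (X ^ pu) (Y ^ pu) hq
    rwa [← ENNReal.rpow_mul, ← ENNReal.rpow_mul, mul_one_div_cancel h0.ne',
      ENNReal.rpow_one, ENNReal.rpow_one] at h
  rw [ENNReal.tsum_eq_iSup_sum]
  refine iSup_le fun s => ?_
  have hfin : ∑ i ∈ s, a i ≤ (∑ i ∈ s, a i ^ pu) ^ (1 / pu) := by
    classical
    induction s using Finset.induction with
    | empty => simp
    | insert _ _ hx ih =>
      rename_i x s
      rw [Finset.sum_insert hx, Finset.sum_insert hx]
      refine le_trans (add_le_add_right ih _) ?_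
      refine le_trans (two_add _ _) ?_
      rw [← ENNReal.rpow_mul, one_div_mul_cancel h0.ne', ENNReal.rpow_one]
  exact hfin.trans
    (ENNReal.rpow_le_rpow (ENNReal.sum_le_tsum s) (by positivity))

lemma measurable_snoc (m : ℕ) :
    Measurable (fun q : (V m) × ℝ => (Fin.snoc q.1 q.2 : Fin (m + 1) → ℝ)) := by
  refine measurable_pi_lambda _ fun i => ?_
  induction i using Fin.lastCases with
  | last => simpa [Fin.snoc_last] using measurable_snd
  | cast j => simp only [Fin.snoc_castSucc]; exact (measurable_pi_apply j).comp measurable_fst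

lemma measurable_mixedNorm_comp {α : Type*} [MeasurableSpace α] :
    ∀ (m : ℕ) (p : Fin m → ℝ≥0∞), (∀ i, p i ≠ ∞) → ∀ (F : α × V m → ℝ≥0∞), Measurable F →
      Measurable (fun a => mixedNorm m p (fun y => F (a, y)))
  | 0, p, _, F, hF => by
    simp only [mixedNorm]; exact hF.comp (measurable_id.prodMk measurable_const)
  | (m + 1), p, hp, F, hF => by
    have hG : Measurable (fun q : (α × ℝ) × V m => F (q.1.1, Fin.snoc q.2 q.1.2)) := by
      refine hF.comp ?_
      exact (measurable_fst.comp measurable_fst).prodMk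
        ((measurable_snoc m).comp (measurable_snd.prodMk (measurable_snd.comp measurable_fst)))
    have ih := measurable_mixedNorm_comp m (fun i => p i.castSucc) (fun i => hp _) _ hG
    simp only [mixedNorm, lpStep, if_neg (hp (Fin.last m))]
    exact (Measurable.lintegral_prod_right' (ih.pow_const _)).pow_const _

lemma mixedNorm_mono : ∀ (m : ℕ) (p : Fin m → ℝ≥0∞) (f g : V m → ℝ≥0∞),
    (∀ x, f x ≤ g x) → mixedNorm m p f ≤ mixedNorm m p g
  | 0, p, f, g, h => h _
  | (m + 1), p, f, g, h => by
    simp only [mixedNorm, lpStep]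
    split
    · exact essSup_mono_ae (Filter.Eventually.of_forall fun t =>
        mixedNorm_mono m _ _ _ fun y => h _)
    · refine ENNReal.rpow_le_rpow (lintegral_mono fun t => ?_) (by positivity)
      exact ENNReal.rpow_le_rpow (mixedNorm_mono m _ _ _ fun y => h _) ENNReal.toReal_nonneg

lemma mixedNorm_const_mul : ∀ (m : ℕ) (p : Fin m → ℝ≥0∞), (∀ i, p i ≠ 0 ∧ p i ≠ ∞) →
    ∀ (c : ℝ≥0∞), c ≠ ∞ → ∀ f : V m → ℝ≥0∞,
      mixedNorm m p (fun x => c * f x) = c * mixedNorm m p f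
  | 0, p, hp, c, hc, f => rfl
  | (m + 1), p, hp, c, hc, f => by
    have hpr0 : 0 < (p (Fin.last m)).toReal :=
      ENNReal.toReal_pos (hp _).1 (hp _).2
    simp only [mixedNorm, lpStep, if_neg (hp (Fin.last m)).2]
    set pr := (p (Fin.last m)).toReal with hprdef
    have h1 : ∀ t, mixedNorm m (fun i => p i.castSucc)
        (fun y => (fun x => c * f x) (Fin.snoc y t)) ^ pr
        = c ^ pr * (mixedNorm m (fun i => p i.castSucc) (fun y => f (Fin.snoc y t))) ^ pr := by
      intro t
      rw [show (fun y => (fun x => c * f x) (Fin.snoc y t))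
            = fun y => c * f (Fin.snoc y t) from rfl,
        mixedNorm_const_mul m _ (fun i => hp _) c hc,
        ENNReal.mul_rpow_of_nonneg _ _ hpr0.le]
    simp only [h1]
    rw [lintegral_const_mul' _ _ (ENNReal.rpow_lt_top_of_nonneg hpr0.le hc).ne,
      ENNReal.mul_rpow_of_nonneg _ _ (by positivity : (0:ℝ) ≤ 1 / pr),
      ← ENNReal.rpow_mul, mul_one_div_cancel hpr0.ne', ENNReal.rpow_one]

/-- Reverse Minkowski inequality for `0 < pr ≤ 1`. -/
lemma rev_minkowski {α : Type*} [MeasurableSpace α] (μ : Measure α) {pr : ℝ}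
    (h0 : 0 < pr) (h1 : pr ≤ 1) (u v : α → ℝ≥0∞) (hu : Measurable u) (hv : Measurable v) :
    (∫⁻ t, u t ^ pr ∂μ) ^ (1 / pr) + (∫⁻ t, v t ^ pr ∂μ) ^ (1 / pr)
      ≤ (∫⁻ t, (u t + v t) ^ pr ∂μ) ^ (1 / pr) := by
  have hq : (1 : ℝ) ≤ 1 / pr := by rw [le_div_iff₀ h0]; simpa using h1
  have hinv0 : (0:ℝ) < 1 / pr := by positivity
  set a := ∫⁻ t, u t ^ pr ∂μ with ha
  set b := ∫⁻ t, v t ^ pr ∂μ with hb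
  have hmono1 : a ≤ ∫⁻ t, (u t + v t) ^ pr ∂μ :=
    lintegral_mono fun t => ENNReal.rpow_le_rpow le_self_add h0.le
  have hmono2 : b ≤ ∫⁻ t, (u t + v t) ^ pr ∂μ :=
    lintegral_mono fun t => ENNReal.rpow_le_rpow le_add_self h0.le
  by_cases ha0 : a = 0
  · rw [ha0, ENNReal.zero_rpow_of_pos hinv0, zero_add]
    exact ENNReal.rpow_le_rpow hmono2 hinv0.le
  by_cases hb0 : b = 0
  · rw [hb0, ENNReal.zero_rpow_of_pos hinv0, add_zero]
    exact ENNReal.rpow_le_rpow hmono1 hinv0.le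
  by_cases hat : a = ∞
  · have h' : ∫⁻ t, (u t + v t) ^ pr ∂μ = ∞ := top_le_iff.mp (hat ▸ hmono1)
    rw [h', ENNReal.top_rpow_of_pos hinv0]
    exact le_top
  by_cases hbt : b = ∞
  · have h' : ∫⁻ t, (u t + v t) ^ pr ∂μ = ∞ := top_le_iff.mp (hbt ▸ hmono2)
    rw [h', ENNReal.top_rpow_of_pos hinv0]
    exact le_top
  -- main case
  set A := a ^ (1 / pr) with hA
  set B := b ^ (1 / pr) with hB
  have hA0 : A ≠ 0 := by
    simp only [hA, Ne, ENNReal.rpow_eq_zero_iff_of_pos hinv0]; exact ha0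
  have hAt : A ≠ ∞ := (ENNReal.rpow_lt_top_of_nonneg hinv0.le hat).ne
  have hB0 : B ≠ 0 := by
    simp only [hB, Ne, ENNReal.rpow_eq_zero_iff_of_pos hinv0]; exact hb0
  have hBt : B ≠ ∞ := (ENNReal.rpow_lt_top_of_nonneg hinv0.le hbt).ne
  set σ := A + B with hσ
  have hσ0 : σ ≠ 0 := by simp [hσ, hA0]
  have hσt : σ ≠ ∞ := by simp [hσ, hAt, hBt]
  set w₁ := A / σ with hw₁
  set w₂ := B / σ with hw₂
  have hw : w₁ + w₂ = 1 := by
    rw [hw₁, hw₂, ENNReal.div_add_div_same, hσ, ENNReal.div_self hσ0 hσt]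
  have hw₁0 : w₁ ≠ 0 := by
    simp only [hw₁, Ne, ENNReal.div_eq_zero_iff, not_or]; exact ⟨hA0, hσt⟩
  have hw₁t : w₁ ≠ ∞ := by
    simp only [hw₁, Ne, ENNReal.div_eq_top, not_or, not_and_or]
    exact ⟨Or.inr hσ0, Or.inl hAt⟩
  have hw₂0 : w₂ ≠ 0 := by
    simp only [hw₂, Ne, ENNReal.div_eq_zero_iff, not_or]; exact ⟨hB0, hσt⟩
  have hw₂t : w₂ ≠ ∞ := by
    simp only [hw₂, Ne, ENNReal.div_eq_top, not_or, not_and_or]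
    exact ⟨Or.inr hσ0, Or.inl hBt⟩
  -- pointwise concavity inequality
  have hpoint : ∀ t, w₁ * ((u t / w₁) ^ pr) + w₂ * ((v t / w₂) ^ pr) ≤ (u t + v t) ^ pr := by
    intro t
    have key := ENNReal.rpow_arith_mean_le_arith_mean2_rpow w₁ w₂
      ((u t / w₁) ^ pr) ((v t / w₂) ^ pr) hw hq
    rw [← ENNReal.rpow_mul, ← ENNReal.rpow_mul, mul_one_div_cancel h0.ne',
      ENNReal.rpow_one, ENNReal.rpow_one, ENNReal.mul_div_cancel hw₁0 hw₁t,
      ENNReal.mul_div_cancel hw₂0 hw₂t] at key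
    have h2 := ENNReal.rpow_le_rpow key h0.le
    rwa [← ENNReal.rpow_mul, one_div_mul_cancel h0.ne', ENNReal.rpow_one] at h2
  -- rewrite the weighted terms
  have hpt : ∀ (w : ℝ≥0∞), w ≠ 0 → w ≠ ∞ → ∀ z : ℝ≥0∞,
      w * ((z / w) ^ pr) = w ^ (1 - pr) * z ^ pr := by
    intro w hw0 hwt z
    rw [ENNReal.div_rpow_of_nonneg _ _ h0.le, ENNReal.rpow_sub 1 pr hw0 hwt,
      ENNReal.rpow_one, div_eq_mul_inv, div_eq_mul_inv, mul_comm (z ^ pr),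
      ← mul_assoc]
  -- integrate
  have hint : w₁ ^ (1 - pr) * a + w₂ ^ (1 - pr) * b ≤ ∫⁻ t, (u t + v t) ^ pr ∂μ := by
    have e1 : ∀ (w : ℝ≥0∞), w ≠ ∞ → ∀ (g : α → ℝ≥0∞),
        ∫⁻ t, w ^ (1 - pr) * (g t ^ pr) ∂μ = w ^ (1 - pr) * ∫⁻ t, g t ^ pr ∂μ :=
      fun w hwt g => lintegral_const_mul' _ _
        (ENNReal.rpow_lt_top_of_nonneg (by linarith) hwt).ne
    calc w₁ ^ (1 - pr) * a + w₂ ^ (1 - pr) * b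
        = (∫⁻ t, w₁ ^ (1 - pr) * (u t ^ pr) ∂μ) + ∫⁻ t, w₂ ^ (1 - pr) * (v t ^ pr) ∂μ := by
          rw [e1 w₁ hw₁t u, e1 w₂ hw₂t v]
      _ ≤ ∫⁻ t, (w₁ ^ (1 - pr) * (u t ^ pr) + w₂ ^ (1 - pr) * (v t ^ pr)) ∂μ :=
          le_lintegral_add _ _
      _ ≤ ∫⁻ t, (u t + v t) ^ pr ∂μ := by
          refine lintegral_mono fun t => ?_
          rw [← hpt w₁ hw₁0 hw₁t, ← hpt w₂ hw₂0 hw₂t]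
          exact hpoint t
  -- algebraic identity
  have hid : w₁ ^ (1 - pr) * a + w₂ ^ (1 - pr) * b = σ ^ pr := by
    have haA : a = A ^ pr := by
      rw [hA, ← ENNReal.rpow_mul, one_div_mul_cancel h0.ne', ENNReal.rpow_one]
    have hbB : b = B ^ pr := by
      rw [hB, ← ENNReal.rpow_mul, one_div_mul_cancel h0.ne', ENNReal.rpow_one]
    have hterm : ∀ (C : ℝ≥0∞), C ≠ 0 → C ≠ ∞ →
        (C / σ) ^ (1 - pr) * C ^ pr = C / σ ^ (1 - pr) := by
      intro C hC0 hCt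
      rw [ENNReal.div_rpow_of_nonneg _ _ (by linarith : (0:ℝ) ≤ 1 - pr),
        div_eq_mul_inv, div_eq_mul_inv, mul_right_comm,
        ← ENNReal.rpow_add _ _ hC0 hCt, sub_add_cancel, ENNReal.rpow_one]
    rw [haA, hbB, hw₁, hw₂, hterm A hA0 hAt, hterm B hB0 hBt,
      ENNReal.div_add_div_same, ← hσ, eq_comm,
      ENNReal.eq_div_iff (by
        intro hcon
        rcases ENNReal.rpow_eq_zero_iff.mp hcon with ⟨h', _⟩ | ⟨h', _⟩
        · exact hσ0 h'
        · exact hσt h'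
      ) (ENNReal.rpow_lt_top_of_nonneg (by linarith) hσt).ne,
      ← ENNReal.rpow_add _ _ hσ0 hσt]
    norm_num
  calc A + B = σ := rfl
    _ = (σ ^ pr) ^ (1 / pr) := by
        rw [← ENNReal.rpow_mul, mul_one_div_cancel h0.ne', ENNReal.rpow_one]
    _ ≤ (∫⁻ t, (u t + v t) ^ pr ∂μ) ^ (1 / pr) :=
        ENNReal.rpow_le_rpow (hid ▸ hint) hinv0.le

end AuxLemmas
section AuxLemmas2

lemma mixedNorm_add_le : ∀ (m : ℕ) (p : Fin m → ℝ≥0∞), (∀ i, p i ≠ 0 ∧ p i ≤ 1) →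
    ∀ f g : V m → ℝ≥0∞, Measurable f → Measurable g →
      mixedNorm m p f + mixedNorm m p g ≤ mixedNorm m p (fun x => f x + g x)
  | 0, p, hp, f, g, hf, hg => le_of_eq rfl
  | (m + 1), p, hp, f, g, hf, hg => by
    have hptop : ∀ i, p i ≠ ∞ := fun i => ((hp i).2.trans_lt ENNReal.one_lt_top).ne
    have hpr0 : 0 < (p (Fin.last m)).toReal :=
      ENNReal.toReal_pos (hp _).1 (hptop _)
    have hpr1 : (p (Fin.last m)).toReal ≤ 1 := by
      have := ENNReal.toReal_mono ENNReal.one_ne_top (hp (Fin.last m)).2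
      simpa using this
    simp only [mixedNorm, lpStep, if_neg (hptop (Fin.last m))]
    set pr := (p (Fin.last m)).toReal with hprdef
    set u : ℝ → ℝ≥0∞ :=
      fun t => mixedNorm m (fun i => p i.castSucc) (fun y => f (Fin.snoc y t)) with hu_def
    set v : ℝ → ℝ≥0∞ :=
      fun t => mixedNorm m (fun i => p i.castSucc) (fun y => g (Fin.snoc y t)) with hv_def
    have hmeas : ∀ h : V (m+1) → ℝ≥0∞, Measurable h → Measurable
        (fun t : ℝ => mixedNorm m (fun i => p i.castSucc) (fun y => h (Fin.snoc y t))) := by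
      intro h hh
      exact measurable_mixedNorm_comp m _ (fun i => hptop _)
        (fun q : ℝ × V m => h (Fin.snoc q.2 q.1))
        (hh.comp ((measurable_snoc m).comp (measurable_snd.prodMk measurable_fst)))
    have hu : Measurable u := hmeas f hf
    have hv : Measurable v := hmeas g hg
    calc (∫⁻ t, u t ^ pr) ^ (1 / pr) + (∫⁻ t, v t ^ pr) ^ (1 / pr)
        ≤ (∫⁻ t, (u t + v t) ^ pr) ^ (1 / pr) :=
          rev_minkowski volume hpr0 hpr1 u v hu hv
      _ ≤ (∫⁻ t, mixedNorm m (fun i => p i.castSucc)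
              (fun y => (fun x => f x + g x) (Fin.snoc y t)) ^ pr) ^ (1 / pr) := by
          refine ENNReal.rpow_le_rpow (lintegral_mono fun t => ?_) (by positivity)
          refine ENNReal.rpow_le_rpow ?_ hpr0.le
          exact mixedNorm_add_le m _ (fun i => hp _) _ _
            (hf.comp ((measurable_snoc m).comp (measurable_id.prodMk measurable_const)))
            (hg.comp ((measurable_snoc m).comp (measurable_id.prodMk measurable_const)))

lemma mixedNorm_sum_le (m : ℕ) (p : Fin m → ℝ≥0∞) (hp : ∀ i, p i ≠ 0 ∧ p i ≤ 1)
    (f : ℕ → V m → ℝ≥0∞) (hf : ∀ i, Measurable (f i)) (s : Finset ℕ) :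
    ∑ i ∈ s, mixedNorm m p (f i) ≤ mixedNorm m p (fun x => ∑ i ∈ s, f i x) := by
  classical
  induction s using Finset.induction with
  | empty => simp
  | insert _ _ hx ih =>
    rename_i j s
    rw [Finset.sum_insert hx]
    calc mixedNorm m p (f j) + ∑ i ∈ s, mixedNorm m p (f i)
        ≤ mixedNorm m p (f j) + mixedNorm m p (fun x => ∑ i ∈ s, f i x) :=
          add_le_add_right ih _
      _ ≤ mixedNorm m p (fun x => f j x + ∑ i ∈ s, f i x) :=
          mixedNorm_add_le m p hp _ _ (hf j)
            (Finset.measurable_sum s fun i _ => hf i)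
      _ = mixedNorm m p (fun x => ∑ i ∈ insert j s, f i x) := by
          simp [Finset.sum_insert hx]

lemma tsum_mixedNorm_le (m : ℕ) (p : Fin m → ℝ≥0∞) (hp : ∀ i, p i ≠ 0 ∧ p i ≤ 1)
    (f : ℕ → V m → ℝ≥0∞) (hf : ∀ i, Measurable (f i)) :
    ∑' i, mixedNorm m p (f i) ≤ mixedNorm m p (fun x => ∑' i, f i x) := by
  rw [ENNReal.tsum_eq_iSup_sum]
  refine iSup_le fun s => (mixedNorm_sum_le m p hp f hf s).trans ?_
  exact mixedNorm_mono m p _ _ fun x => ENNReal.sum_le_tsum s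

/-- The mixed norm of the indicator of an open box. -/
lemma mixedNorm_box : ∀ (m : ℕ) (p : Fin m → ℝ≥0∞), (∀ i, p i ≠ 0 ∧ p i ≠ ∞) →
    ∀ a b : V m,
    mixedNorm m p ((Set.univ.pi fun i => Set.Ioo (a i) (b i)).indicator fun _ => (1 : ℝ≥0∞))
      = ∏ i, (ENNReal.ofReal (b i - a i)) ^ (1 / (p i).toReal)
  | 0, p, hp, a, b => by
    have hmem : (fun i : Fin 0 => i.elim0) ∈ Set.univ.pi fun i : Fin 0 => Set.Ioo (a i) (b i) :=
      fun i _ => i.elim0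
    simp [mixedNorm, Set.indicator_of_mem hmem]
  | (m + 1), p, hp, a, b => by
    have hpr0 : 0 < (p (Fin.last m)).toReal :=
      ENNReal.toReal_pos (hp _).1 (hp _).2
    set pr := (p (Fin.last m)).toReal with hprdef
    set S : Set (V (m+1)) := Set.univ.pi fun i => Set.Ioo (a i) (b i) with hS
    set S' : Set (V m) :=
      Set.univ.pi fun i : Fin m => Set.Ioo (a i.castSucc) (b i.castSucc) with hS'
    set I : Set ℝ := Set.Ioo (a (Fin.last m)) (b (Fin.last m)) with hI
    have key : ∀ (t : ℝ) (y : V m),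
        S.indicator (fun _ => (1:ℝ≥0∞)) (Fin.snoc y t)
          = I.indicator (fun _ => (1:ℝ≥0∞)) t * S'.indicator (fun _ => (1:ℝ≥0∞)) y := by
      intro t y
      have hiff : (Fin.snoc y t : V (m+1)) ∈ S ↔ t ∈ I ∧ y ∈ S' := by
        simp only [hS, hS', hI, Set.mem_univ_pi]
        constructor
        · intro H
          refine ⟨by simpa [Fin.snoc_last] using H (Fin.last m), fun i => ?_⟩
          simpa [Fin.snoc_castSucc] using H i.castSucc
        · rintro ⟨h1, h2⟩ i
          induction i using Fin.lastCases with
          | last => simpa [Fin.snoc_last] using h1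
          | cast j => simpa [Fin.snoc_castSucc] using h2 j
      by_cases h1 : t ∈ I <;> by_cases h2 : y ∈ S' <;>
        simp [Set.indicator_apply, hiff, h1, h2]
    set Vm : ℝ≥0∞ :=
      ∏ i : Fin m, (ENNReal.ofReal (b i.castSucc - a i.castSucc)) ^ (1 / (p i.castSucc).toReal)
      with hVm
    have hVmtop : Vm ≠ ∞ := by
      refine (ENNReal.prod_lt_top fun i _ => ?_).ne
      exact ENNReal.rpow_lt_top_of_nonneg (by positivity) ENNReal.ofReal_ne_top
    have hinner : ∀ t : ℝ,
        mixedNorm m (fun i => p i.castSucc) (fun y => S.indicator (fun _ => (1:ℝ≥0∞)) (Fin.snoc y t))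
          = I.indicator (fun _ => (1:ℝ≥0∞)) t * Vm := by
      intro t
      simp only [key]
      rw [mixedNorm_const_mul m _ (fun i => hp _) _ (by
          by_cases h : t ∈ I <;> simp [Set.indicator_apply, h]),
        mixedNorm_box m _ (fun i => hp _) _ _]
    simp only [mixedNorm, lpStep, if_neg (hp (Fin.last m)).2, hinner]
    have hrpow_ind : ∀ t : ℝ, (I.indicator (fun _ => (1:ℝ≥0∞)) t * Vm) ^ pr
        = Vm ^ pr * I.indicator (fun _ => (1:ℝ≥0∞)) t := by
      intro t
      rw [ENNReal.mul_rpow_of_nonneg _ _ hpr0.le, mul_comm]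
      congr 1
      by_cases h : t ∈ I <;>
        simp [Set.indicator_apply, h, ENNReal.zero_rpow_of_pos hpr0]
    simp only [← hprdef, hrpow_ind]
    have hlint : (∫⁻ t : ℝ, I.indicator (fun _ => (1:ℝ≥0∞)) t) = volume I :=
      lintegral_indicator_one measurableSet_Ioo
    rw [lintegral_const_mul' _ _ (ENNReal.rpow_lt_top_of_nonneg hpr0.le hVmtop).ne,
      hlint, hI, Real.volume_Ioo,
      ENNReal.mul_rpow_of_nonneg _ _ (by positivity : (0:ℝ) ≤ 1 / pr),
      ← ENNReal.rpow_mul, mul_one_div_cancel hpr0.ne', ENNReal.rpow_one,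
      Fin.prod_univ_castSucc]

end AuxLemmas2
section AuxLemmas3

lemma continuous_mulVec (M : Matrix (Fin n) (Fin n) ℝ) :
    Continuous fun v : V n => M.mulVec v := by
  have h : (fun v : V n => M.mulVec v) = fun v i => ∑ j, M i j * v j := by
    ext v i; simp [Matrix.mulVec, dotProduct]
  rw [h]
  exact continuous_pi fun i => continuous_finset_sum _ fun j _ =>
    continuous_const.mul (continuous_apply j)

lemma dball_eq_preimage (A : GLn n) (Δ : Set (V n)) (k : ℤ) :
    dball A Δ k = (fun y : V n =>
      Matrix.mulVec (((A ^ k)⁻¹ : GLn n) : Matrix (Fin n) (Fin n) ℝ) y) ⁻¹' Δ := by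
  have h1 : (((A ^ k)⁻¹ : GLn n) : Matrix (Fin n) (Fin n) ℝ)
      * ((A ^ k : GLn n) : Matrix (Fin n) (Fin n) ℝ) = 1 := by
    rw [← Units.val_mul]; simp
  have h2 : ((A ^ k : GLn n) : Matrix (Fin n) (Fin n) ℝ)
      * (((A ^ k)⁻¹ : GLn n) : Matrix (Fin n) (Fin n) ℝ) = 1 := by
    rw [← Units.val_mul]; simp
  ext y
  constructor
  · rintro ⟨d, hd, rfl⟩
    show Matrix.mulVec _ (Matrix.mulVec _ d) ∈ Δ
    rw [Matrix.mulVec_mulVec, h1, Matrix.one_mulVec]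
    exact hd
  · intro hy
    refine ⟨_, hy, ?_⟩
    show Matrix.mulVec _ (Matrix.mulVec _ y) = y
    rw [Matrix.mulVec_mulVec, h2, Matrix.one_mulVec]

lemma dball_bound (A : GLn n) {Δ : Set (V n)} (hΔ : IsEllipsoid Δ) (k : ℤ) :
    ∃ R : ℝ, ∀ y ∈ dball A Δ k, ∀ i, |y i| ≤ R := by
  obtain ⟨T, hT⟩ := hΔ
  set N := ((A ^ k : GLn n) : Matrix (Fin n) (Fin n) ℝ) * (T : Matrix (Fin n) (Fin n) ℝ) with hN
  refine ⟨∑ i, ∑ j, |N i j|, ?_⟩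
  rintro y ⟨d, hd, rfl⟩ i
  rw [hT] at hd
  obtain ⟨w, hw, rfl⟩ := hd
  show |Matrix.mulVec ((A ^ k : GLn n) : Matrix (Fin n) (Fin n) ℝ)
      (Matrix.mulVec (T : Matrix (Fin n) (Fin n) ℝ) w) i| ≤ _
  rw [Matrix.mulVec_mulVec]
  have hwb : ∀ j, |w j| ≤ 1 := by
    intro j
    have h1 : w j ^ 2 ≤ ∑ l, w l ^ 2 :=
      Finset.single_le_sum (f := fun l => w l ^ 2) (fun l _ => sq_nonneg _) (Finset.mem_univ j)
    have h2 : Real.sqrt (∑ l, w l ^ 2) < 1 := hw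
    calc |w j| = Real.sqrt (w j ^ 2) := (Real.sqrt_sq_eq_abs _).symm
      _ ≤ Real.sqrt (∑ l, w l ^ 2) := Real.sqrt_le_sqrt h1
      _ ≤ 1 := h2.le
  calc |Matrix.mulVec N w i| = |∑ j, N i j * w j| := by
        simp [Matrix.mulVec, dotProduct]
    _ ≤ ∑ j, |N i j * w j| := Finset.abs_sum_le_sum_abs _ _
    _ ≤ ∑ j, |N i j| := Finset.sum_le_sum fun j _ => by
        rw [abs_mul]; exact mul_le_of_le_one_right (abs_nonneg _) (hwb j)
    _ ≤ ∑ i', ∑ j, |N i' j| :=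
        Finset.single_le_sum
          (f := fun i' => ∑ j, |N i' j|)
          (fun i' _ => Finset.sum_nonneg fun j _ => abs_nonneg _) (Finset.mem_univ i)

lemma indicator_one_le_of_subset {s t : Set (V n)} (h : s ⊆ t) :
    ∀ x, s.indicator (fun _ => (1:ℝ≥0∞)) x ≤ t.indicator (fun _ => (1:ℝ≥0∞)) x := by
  intro x
  by_cases hx : x ∈ s
  · simp [Set.indicator_of_mem hx, Set.indicator_of_mem (h hx)]
  · simp [Set.indicator_of_notMem hx]

lemma mixedNorm_indicator_ball {A : GLn n} {Δ : Set (V n)} {r : ℝ}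
    (hset : DilationSetup A Δ r) (p : Fin n → ℝ≥0∞) (hp : ∀ i, p i ≠ 0 ∧ p i ≠ ∞)
    {B : Set (V n)} (hB : B ∈ dilatedBalls A Δ) :
    mixedNorm n p (B.indicator fun _ => (1:ℝ≥0∞)) ≠ 0 ∧
      mixedNorm n p (B.indicator fun _ => (1:ℝ≥0∞)) ≠ ∞ ∧ MeasurableSet B := by
  obtain ⟨x0, k, rfl⟩ := hB
  set B := (x0 + ·) '' dball A Δ k with hBdef
  have hopen_d : IsOpen (dball A Δ k) := by
    rw [dball_eq_preimage]
    exact hset.isOpen.preimage (continuous_mulVec _)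
  have himg : B = (fun y => -x0 + y) ⁻¹' dball A Δ k := by
    ext y
    constructor
    · rintro ⟨s, hs, rfl⟩; simpa using hs
    · intro hy; exact ⟨-x0 + y, hy, by simp⟩
  have hopen : IsOpen B := by
    rw [himg]; exact hopen_d.preimage (continuous_const.add continuous_id)
  have hΔne : Δ.Nonempty :=
    nonempty_of_measure_ne_zero (by rw [hset.volume_eq]; exact one_ne_zero)
  obtain ⟨d0, hd0⟩ := hΔne
  have hBne : B.Nonempty :=
    ⟨x0 + Matrix.mulVec ((A ^ k : GLn n) : Matrix (Fin n) (Fin n) ℝ) d0,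
      ⟨_, ⟨d0, hd0, rfl⟩, rfl⟩⟩
  obtain ⟨R, hR⟩ := dball_bound A hset.ellipsoid k
  refine ⟨?_, ?_, hopen.measurableSet⟩
  · -- lower bound via a small box inside B
    obtain ⟨z, hz⟩ := hBne
    obtain ⟨ε, hε, hball⟩ := Metric.isOpen_iff.mp hopen z hz
    have hbox : (Set.univ.pi fun i => Set.Ioo (z i - ε / 2) (z i + ε / 2)) ⊆ B := by
      intro y hy
      apply hball
      rw [Metric.mem_ball, dist_pi_lt_iff hε]
      intro i
      have := hy i (Set.mem_univ i)
      rw [Real.dist_eq, abs_lt]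
      simp only [Set.mem_Ioo] at this
      constructor <;> linarith
    have hlow := mixedNorm_mono n p _ _ (indicator_one_le_of_subset hbox)
    rw [mixedNorm_box n p hp] at hlow
    intro hcon
    rw [hcon] at hlow
    have hzero : (∏ i : Fin n,
        (ENNReal.ofReal (z i + ε / 2 - (z i - ε / 2))) ^ (1 / (p i).toReal)) = 0 :=
      le_antisymm hlow zero_le
    refine Finset.prod_ne_zero_iff.mpr (fun i _ => ?_) hzero
    have h2 : (0:ℝ) < z i + ε / 2 - (z i - ε / 2) := by linarith
    exact (ENNReal.rpow_pos (ENNReal.ofReal_pos.mpr h2) ENNReal.ofReal_ne_top).ne'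
  · -- upper bound via a big box containing B
    have hsub : B ⊆ Set.univ.pi fun i => Set.Ioo (x0 i - (R + 1)) (x0 i + (R + 1)) := by
      rintro _ ⟨s, hs, rfl⟩
      intro i _
      have := hR s hs i
      rw [abs_le] at this
      constructor
      · show x0 i - (R + 1) < x0 i + s i
        linarith [this.1]
      · show x0 i + s i < x0 i + (R + 1)
        linarith [this.2]
    have hup := mixedNorm_mono n p _ _ (indicator_one_le_of_subset hsub)
    rw [mixedNorm_box n p hp] at hup
    intro hcon
    rw [hcon] at hup
    have hfin : (∏ i : Fin n,
        (ENNReal.ofReal (x0 i + (R + 1) - (x0 i - (R + 1)))) ^ (1 / (p i).toReal)) ≠ ∞ := by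
      refine (ENNReal.prod_lt_top fun i _ => ?_).ne
      exact ENNReal.rpow_lt_top_of_nonneg (by positivity) ENNReal.ofReal_ne_top
    exact hfin (top_le_iff.mp hup)

end AuxLemmas3


/-- For `p⃗ ∈ (0,1]^n` and `p̲ ∈ (0, min{p₋,1})`, the sum `Σ|λ_i|`
is controlled by the atomic-type quantity. -/
theorem tsum_le_atomSum (n : ℕ) (A : GLn n) (Δ : Set (V n)) (r : ℝ)
    (h : DilationSetup A Δ r) (p : Fin n → ℝ≥0∞) (hp : ∀ i, 0 < p i ∧ p i ≤ 1)
    (pu : ℝ) (hpu : 0 < pu) (hpu' : ENNReal.ofReal pu < min 1 (⨅ i, p i))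
    (lam : ℕ → ℂ) (Bs : ℕ → Set (V n)) (hBs : ∀ i, Bs i ∈ dilatedBalls A Δ) :
    ∑' i, (‖lam i‖₊ : ℝ≥0∞) ≤
      mixedNorm n p (fun x =>
        (∑' i, (((‖lam i‖₊ : ℝ≥0∞) * (Bs i).indicator (fun _ => (1 : ℝ≥0∞)) x) /
            mixedNorm n p ((Bs i).indicator fun _ => 1)) ^ pu) ^ (1 / pu)) := by
  classical
  have hp' : ∀ i, p i ≠ 0 ∧ p i ≠ ∞ :=
    fun i => ⟨(hp i).1.ne', ((hp i).2.trans_lt ENNReal.one_lt_top).ne⟩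
  have hp'' : ∀ i, p i ≠ 0 ∧ p i ≤ 1 := fun i => ⟨(hp i).1.ne', (hp i).2⟩
  have hpu1 : pu ≤ 1 := by
    have h1 : ENNReal.ofReal pu < 1 := lt_of_lt_of_le hpu' (min_le_left _ _)
    exact (ENNReal.ofReal_lt_one.mp h1).le
  have hball := fun i => mixedNorm_indicator_ball h p hp' (hBs i)
  have hconst_ne_top : ∀ i,
      (‖lam i‖₊ : ℝ≥0∞) / mixedNorm n p ((Bs i).indicator fun _ => 1) ≠ ∞ := by
    intro i
    simp only [Ne, ENNReal.div_eq_top, not_or, not_and_or]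
    exact ⟨Or.inr (hball i).1, Or.inl ENNReal.coe_ne_top⟩
  have hmeas_ind : ∀ i, Measurable fun x => (Bs i).indicator (fun _ => (1:ℝ≥0∞)) x :=
    fun i => measurable_const.indicator (hball i).2.2
  calc ∑' i, (‖lam i‖₊ : ℝ≥0∞)
      = ∑' i, ((‖lam i‖₊ : ℝ≥0∞) / mixedNorm n p ((Bs i).indicator fun _ => 1))
          * mixedNorm n p ((Bs i).indicator fun _ => 1) := by
        refine tsum_congr fun i => ?_
        rw [ENNReal.div_mul_cancel (hball i).1 (hball i).2.1]
    _ = ∑' i, mixedNorm n p (fun x =>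
          ((‖lam i‖₊ : ℝ≥0∞) / mixedNorm n p ((Bs i).indicator fun _ => 1))
            * (Bs i).indicator (fun _ => (1:ℝ≥0∞)) x) := by
        refine tsum_congr fun i => ?_
        rw [mixedNorm_const_mul n p hp' _ (hconst_ne_top i)]
    _ ≤ mixedNorm n p (fun x => ∑' i,
          ((‖lam i‖₊ : ℝ≥0∞) / mixedNorm n p ((Bs i).indicator fun _ => 1))
            * (Bs i).indicator (fun _ => (1:ℝ≥0∞)) x) :=
        tsum_mixedNorm_le n p hp'' _ fun i => (hmeas_ind i).const_mul _
    _ ≤ mixedNorm n p (fun x =>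
          (∑' i, (((‖lam i‖₊ : ℝ≥0∞) * (Bs i).indicator (fun _ => (1 : ℝ≥0∞)) x) /
              mixedNorm n p ((Bs i).indicator fun _ => 1)) ^ pu) ^ (1 / pu)) := by
        refine mixedNorm_mono n p _ _ fun x => ?_
        have hpt : ∀ i : ℕ,
            ((‖lam i‖₊ : ℝ≥0∞) / mixedNorm n p ((Bs i).indicator fun _ => 1))
              * (Bs i).indicator (fun _ => (1:ℝ≥0∞)) x
            = ((‖lam i‖₊ : ℝ≥0∞) * (Bs i).indicator (fun _ => (1 : ℝ≥0∞)) x) /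
                mixedNorm n p ((Bs i).indicator fun _ => 1) := by
          intro i
          rw [div_eq_mul_inv, div_eq_mul_inv, mul_right_comm]
        rw [tsum_congr hpt]
        exact tsum_le_rpow_tsum_rpow _ hpu hpu1



end Aniso
end
end
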